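/- (Coset decomposition from the proof of Proposition 6.7, GL_n minuscule case: KtK = ⋃_{w∈W} U(𝒪)ẇtK.) Let n ≥ 2 and 1 ≤ m ≤ n−1, and let t ∈ GL_n(ℚ_p) be the diagonal matrix with entries 1 in positions 1,…,m and p in positions m+1,…,n. Let U(ℤ_p) be the group of upper triangular unipotent matrices over ℤ_p, and for σ ∈ S_n let P_σ ∈ GL_n(ℤ_p) be the associated permutation matrix. Then GL_n(ℤ_p)·t·GL_n(ℤ_p) = ⋃_{σ ∈ S_n} U(ℤ_p)·P_σ·t·GL_n(ℤ_p). -/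

import Mathlib

open Pointwise

/-- `K = GL_n(ℤ_p)` as a set of matrices over `ℚ_[p]`. -/
def GLZset (p : ℕ) [Fact p.Prime] (n : ℕ) : Set (Matrix (Fin n) (Fin n) ℚ_[p]) :=
  {g | (∀ i j, ‖g i j‖ ≤ 1) ∧ ‖g.det‖ = 1}

/-- `U(ℤ_p)`: upper triangular unipotent matrices with entries in `ℤ_p`. -/
def UpperUnipZ (p : ℕ) [Fact p.Prime] (n : ℕ) : Set (Matrix (Fin n) (Fin n) ℚ_[p]) :=
  {u | (∀ i, u i i = 1) ∧ (∀ i j : Fin n, j < i → u i j = 0) ∧ (∀ i j, ‖u i j‖ ≤ 1)}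

section St10Aux

variable {p : ℕ} [Fact p.Prime] {n : ℕ}

lemma st10_norm_sum_le_one {ι : Type*} (s : Finset ι) (f : ι → ℚ_[p])
    (h : ∀ i ∈ s, ‖f i‖ ≤ 1) : ‖∑ i ∈ s, f i‖ ≤ 1 := by
  classical
  induction s using Finset.induction with
  | empty => simp
  | @insert a s hx ih =>
    rw [Finset.sum_insert hx]
    refine le_trans (Padic.nonarchimedean _ _) (max_le ?_ ?_)
    · exact h a (Finset.mem_insert_self a s)
    · exact ih fun i hi => h i (Finset.mem_insert_of_mem hi)

lemma st10_norm_sum_lt_one {ι : Type*} (s : Finset ι) (f : ι → ℚ_[p])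
    (h : ∀ i ∈ s, ‖f i‖ < 1) : ‖∑ i ∈ s, f i‖ < 1 := by
  classical
  induction s using Finset.induction with
  | empty => simp
  | @insert a s hx ih =>
    rw [Finset.sum_insert hx]
    refine lt_of_le_of_lt (Padic.nonarchimedean _ _) (max_lt ?_ ?_)
    · exact h a (Finset.mem_insert_self a s)
    · exact ih fun i hi => h i (Finset.mem_insert_of_mem hi)

lemma st10_units_smul_norm (u : ℤˣ) (x : ℚ_[p]) : ‖u • x‖ = ‖x‖ := by
  rcases Int.units_eq_one_or u with hu | hu <;> subst hu <;>
    simp [Units.smul_def]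

lemma st10_norm_det_le_one {n : ℕ} (M : Matrix (Fin n) (Fin n) ℚ_[p])
    (h : ∀ i j, ‖M i j‖ ≤ 1) : ‖M.det‖ ≤ 1 := by
  rw [Matrix.det_apply]
  refine st10_norm_sum_le_one _ _ fun σ _ => ?_
  rw [st10_units_smul_norm, norm_prod]
  exact Finset.prod_le_one (fun i _ => norm_nonneg _) (fun i _ => h _ _)

lemma st10_K_mul {a b : Matrix (Fin n) (Fin n) ℚ_[p]} (ha : a ∈ GLZset p n)
    (hb : b ∈ GLZset p n) : a * b ∈ GLZset p n := by
  obtain ⟨ha1, ha2⟩ := ha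
  obtain ⟨hb1, hb2⟩ := hb
  refine ⟨fun i j => ?_, by rw [Matrix.det_mul, norm_mul, ha2, hb2, one_mul]⟩
  rw [Matrix.mul_apply]
  exact st10_norm_sum_le_one _ _ fun k _ => by
    rw [norm_mul]; exact mul_le_one₀ (ha1 i k) (norm_nonneg _) (hb1 k j)

lemma st10_K_det_ne_zero {a : Matrix (Fin n) (Fin n) ℚ_[p]} (ha : a ∈ GLZset p n) :
    a.det ≠ 0 := by
  intro h
  have h2 := ha.2
  rw [h, norm_zero] at h2
  exact one_ne_zero h2.symm

lemma st10_K_inv {a : Matrix (Fin n) (Fin n) ℚ_[p]} (ha : a ∈ GLZset p n) :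
    a⁻¹ ∈ GLZset p n ∧ a⁻¹ * a = 1 ∧ a * a⁻¹ = 1 := by
  have hd : a.det ≠ 0 := st10_K_det_ne_zero ha
  have hu : IsUnit a.det := isUnit_iff_ne_zero.mpr hd
  refine ⟨⟨fun i j => ?_, ?_⟩, Matrix.nonsing_inv_mul a hu, Matrix.mul_nonsing_inv a hu⟩
  · rw [Matrix.inv_def, Matrix.smul_apply, Ring.inverse_eq_inv, smul_eq_mul, norm_mul,
      norm_inv, ha.2, inv_one, one_mul, Matrix.adjugate_apply]
    refine st10_norm_det_le_one _ fun k l => ?_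
    by_cases hk : k = j
    · subst hk; rw [Matrix.updateRow_self]
      by_cases hl : l = i <;> simp [Pi.single_apply, hl]
    · rw [Matrix.updateRow_ne hk]; exact ha.1 k l
  · rw [Matrix.det_nonsing_inv, Ring.inverse_eq_inv, norm_inv, ha.2, inv_one]

lemma st10_U_subset_K : UpperUnipZ p n ⊆ GLZset p n := by
  rintro u ⟨h1, h2, h3⟩
  have hdet : u.det = 1 := by
    rw [Matrix.det_of_upperTriangular (fun i j (hij : j < i) => h2 i j hij)]
    simp [h1]
  exact ⟨h3, by rw [hdet, norm_one]⟩

lemma st10_U_mul {a b : Matrix (Fin n) (Fin n) ℚ_[p]} (ha : a ∈ UpperUnipZ p n)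
    (hb : b ∈ UpperUnipZ p n) : a * b ∈ UpperUnipZ p n := by
  obtain ⟨ha1, ha2, ha3⟩ := ha
  obtain ⟨hb1, hb2, hb3⟩ := hb
  refine ⟨fun i => ?_, fun i j hij => ?_, fun i j => ?_⟩
  · rw [Matrix.mul_apply]
    rw [Finset.sum_eq_single i]
    · rw [ha1, hb1, one_mul]
    · intro k _ hk
      rcases lt_or_gt_of_ne hk with h | h
      · rw [ha2 i k h, zero_mul]
      · rw [hb2 k i h, mul_zero]
    · simp
  · rw [Matrix.mul_apply]
    apply Finset.sum_eq_zero
    intro k _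
    rcases lt_or_ge k i with h | h
    · rw [ha2 i k h, zero_mul]
    · rw [hb2 k j (lt_of_lt_of_le hij h), mul_zero]
  · rw [Matrix.mul_apply]
    exact st10_norm_sum_le_one _ _ fun k _ => by
      rw [norm_mul]; exact mul_le_one₀ (ha3 i k) (norm_nonneg _) (hb3 k j)

lemma st10_U_one : (1 : Matrix (Fin n) (Fin n) ℚ_[p]) ∈ UpperUnipZ p n := by
  refine ⟨fun i => Matrix.one_apply_eq i, fun i j hij => ?_, fun i j => ?_⟩
  · exact Matrix.one_apply_ne (ne_of_gt hij)
  · by_cases h : i = j <;> simp [Matrix.one_apply, h]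

lemma st10_U_inv {v : Matrix (Fin n) (Fin n) ℚ_[p]} (hv : v ∈ UpperUnipZ p n) :
    v⁻¹ ∈ UpperUnipZ p n ∧ v⁻¹ * v = 1 ∧ v * v⁻¹ = 1 := by
  have hvK := st10_U_subset_K hv
  obtain ⟨hK, hlinv, hrinv⟩ := st10_K_inv hvK
  have hbt : v.BlockTriangular id := fun i j hij => hv.2.1 i j hij
  have : Invertible v := v.invertibleOfIsUnitDet (isUnit_iff_ne_zero.mpr (st10_K_det_ne_zero hvK))
  have hbt' : (v⁻¹).BlockTriangular id := Matrix.blockTriangular_inv_of_blockTriangular hbt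
  refine ⟨⟨fun i => ?_, fun i j hij => hbt' hij, hK.1⟩, hlinv, hrinv⟩
  -- diagonal entries of the inverse are 1
  have h1 : (v⁻¹ * v) i i = 1 := by rw [hlinv, Matrix.one_apply_eq]
  rw [Matrix.mul_apply, Finset.sum_eq_single i] at h1
  · rw [hv.1 i, mul_one] at h1; exact h1
  · intro k _ hk
    rcases lt_or_gt_of_ne hk with h | h
    · rw [hbt' h, zero_mul]
    · rw [hv.2.1 k i h, mul_zero]
  · simp

lemma st10_perm_fix (ρ : Equiv.Perm (Fin n)) (c : ℕ)
    (h1 : ∀ j : Fin n, (j : ℕ) < c → (ρ j : ℕ) ≤ j) :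
    ∀ j : Fin n, (j : ℕ) < c → ρ j = j := by
  have key : ∀ k : ℕ, ∀ j : Fin n, (j : ℕ) = k → (j : ℕ) < c → ρ j = j := by
    intro k
    induction k using Nat.strong_induction_on with
    | _ k ih =>
      intro j hjk hjc
      have hle : (ρ j : ℕ) ≤ (j : ℕ) := h1 j hjc
      rcases eq_or_lt_of_le hle with he | hlt
      · exact Fin.ext he
      · exfalso
        have hfix : ρ (ρ j) = ρ j := ih (ρ j : ℕ) (by omega) (ρ j) rfl (by omega)
        have : (ρ j) = j := ρ.injective hfix
        omega
  exact fun j => key (j : ℕ) j rfl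

lemma st10_pigeonhole (ρ : Equiv.Perm (Fin n)) (c : ℕ) (hc : c < n) :
    (∃ j : Fin n, (j : ℕ) < c ∧ (j : ℕ) < (ρ j : ℕ)) ∨ c ≤ ((ρ ⟨c, hc⟩ : Fin n) : ℕ) := by
  by_contra hcon
  push_neg at hcon
  obtain ⟨h1, h2⟩ := hcon
  have hfix := st10_perm_fix ρ c h1
  have ha : ρ (ρ ⟨c, hc⟩) = ρ ⟨c, hc⟩ := hfix _ h2
  have := ρ.injective ha
  have : ((ρ ⟨c, hc⟩ : Fin n) : ℕ) = c := by rw [this]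
  omega

lemma st10_elim (M : Matrix (Fin n) (Fin n) ℚ_[p]) (hM : M ∈ GLZset p n) :
    ∀ c : ℕ, c ≤ n → ∃ v ∈ UpperUnipZ p n, ∃ σ : Equiv.Perm (Fin n),
      ∀ j : Fin n, (j : ℕ) < c → ∀ i : Fin n, j < i → ‖(v * M) (σ i) j‖ < 1 := by
  classical
  intro c
  induction c with
  | zero => exact fun _ => ⟨1, st10_U_one, 1, fun j hj => by omega⟩
  | succ c IH =>
    intro hc1
    have hcn : c < n := hc1
    obtain ⟨v, hv, σ, hσ⟩ := IH (le_of_lt hcn)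
    set N := v * M with hN
    have hNK : N ∈ GLZset p n := st10_K_mul (st10_U_subset_K hv) hM
    set jc : Fin n := ⟨c, hcn⟩ with hjc
    -- pivot existence
    have hpiv : ∃ i : Fin n, c ≤ (i : ℕ) ∧ ‖N (σ i) jc‖ = 1 := by
      by_contra hcon
      push_neg at hcon
      have hsmall : ∀ i : Fin n, c ≤ (i : ℕ) → ‖N (σ i) jc‖ < 1 := fun i hi =>
        lt_of_le_of_ne (hNK.1 _ _) (hcon i hi)
      have hdet : ‖N.det‖ < 1 := by
        rw [Matrix.det_apply]
        refine st10_norm_sum_lt_one _ _ fun π _ => ?_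
        rw [st10_units_smul_norm, norm_prod]
        obtain ⟨j, hj⟩ : ∃ j : Fin n, ‖N (π j) j‖ < 1 := by
          rcases st10_pigeonhole (π.trans σ.symm) c hcn with ⟨j, hj1, hj2⟩ | h
          · have := hσ j hj1 (σ.symm (π j)) (by rwa [Fin.lt_def])
            rw [Equiv.apply_symm_apply] at this
            exact ⟨j, this⟩
          · have := hsmall (σ.symm (π jc)) h
            rw [Equiv.apply_symm_apply] at this
            exact ⟨jc, this⟩
        calc ∏ i : Fin n, ‖N (π i) i‖
            = ‖N (π j) j‖ * ∏ i ∈ Finset.univ.erase j, ‖N (π i) i‖ := by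
              exact (Finset.mul_prod_erase _ _ (Finset.mem_univ j)).symm
          _ ≤ ‖N (π j) j‖ := by
              refine mul_le_of_le_one_right (norm_nonneg _) ?_
              exact Finset.prod_le_one (fun i _ => norm_nonneg _) (fun i _ => hNK.1 _ _)
          _ < 1 := hj
      exact absurd hNK.2 (ne_of_lt hdet)
    -- choose pivot maximizing σ i
    set S : Finset (Fin n) :=
      Finset.univ.filter (fun i : Fin n => c ≤ (i : ℕ) ∧ ‖N (σ i) jc‖ = 1) with hS
    have hSne : S.Nonempty := by
      obtain ⟨i, hi1, hi2⟩ := hpiv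
      exact ⟨i, by simp [hS, hi1, hi2]⟩
    obtain ⟨i₀, hi₀S, hmax⟩ := Finset.exists_max_image S (fun i => σ i) hSne
    have hi₀c : c ≤ (i₀ : ℕ) := by simp [hS] at hi₀S; exact hi₀S.1
    have hpivnorm : ‖N (σ i₀) jc‖ = 1 := by simp [hS] at hi₀S; exact hi₀S.2
    have hpivne : N (σ i₀) jc ≠ 0 := by
      intro h; rw [h, norm_zero] at hpivnorm; exact one_ne_zero hpivnorm.symm
    -- the clearing coefficients
    set g : Fin n → ℚ_[p] := fun r =>
      if c ≤ ((σ.symm r : Fin n) : ℕ) ∧ r ≠ σ i₀ ∧ ‖N r jc‖ = 1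
      then -(N r jc) / N (σ i₀) jc else 0 with hg
    have hgnorm : ∀ r, ‖g r‖ ≤ 1 := by
      intro r
      by_cases hcond : c ≤ ((σ.symm r : Fin n) : ℕ) ∧ r ≠ σ i₀ ∧ ‖N r jc‖ = 1
      · simp only [hg, if_pos hcond]
        rw [norm_div, norm_neg, hpivnorm, div_one]; exact hNK.1 _ _
      · simp only [hg, if_neg hcond]; simp
    have hgzero : ∀ r, σ i₀ < r → g r = 0 := by
      intro r hr
      by_cases hcond : c ≤ ((σ.symm r : Fin n) : ℕ) ∧ r ≠ σ i₀ ∧ ‖N r jc‖ = 1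
      · exfalso
        obtain ⟨hc1', hc2', hc3'⟩ := hcond
        have hrS : σ.symm r ∈ S := by
          simp only [hS, Finset.mem_filter, Finset.mem_univ, true_and]
          exact ⟨hc1', by rwa [Equiv.apply_symm_apply]⟩
        have := hmax _ hrS
        rw [Equiv.apply_symm_apply] at this
        exact absurd (lt_of_lt_of_le hr this) (lt_irrefl _)
      · simp only [hg, if_neg hcond]
    have hgi₀ : g (σ i₀) = 0 := by
      have hcond : ¬(c ≤ ((σ.symm (σ i₀) : Fin n) : ℕ) ∧ σ i₀ ≠ σ i₀ ∧ ‖N (σ i₀) jc‖ = 1) := by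
        intro h; exact h.2.1 rfl
      simp only [hg, if_neg hcond]
    set E : Matrix (Fin n) (Fin n) ℚ_[p] :=
      1 + Matrix.of (fun r s => if s = σ i₀ then g r else 0) with hE
    have hEU : E ∈ UpperUnipZ p n := by
      refine ⟨fun i => ?_, fun i j hij => ?_, fun i j => ?_⟩
      · rw [hE]
        simp only [Matrix.add_apply, Matrix.one_apply_eq, Matrix.of_apply]
        by_cases h : i = σ i₀
        · subst h; simp [hgi₀]
        · simp [h]
      · rw [hE]
        simp only [Matrix.add_apply, Matrix.one_apply_ne (ne_of_gt hij), Matrix.of_apply]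
        by_cases h : j = σ i₀
        · subst h; rw [hgzero i hij]; simp
        · simp [h]
      · rw [hE]
        simp only [Matrix.add_apply, Matrix.of_apply]
        by_cases h : i = j
        · subst h
          by_cases h2 : i = σ i₀
          · subst h2; simp [hgi₀]
          · simp [h2]
        · rw [Matrix.one_apply_ne h]
          by_cases h2 : j = σ i₀
          · subst h2; simpa using hgnorm i
          · simp [h2]
    have hEN : ∀ r j, (E * N) r j = N r j + g r * N (σ i₀) j := by
      intro r j
      rw [hE, Matrix.add_mul, Matrix.one_mul, Matrix.add_apply, Matrix.mul_apply]
      congr 1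
      rw [Finset.sum_eq_single (σ i₀)]
      · simp
      · intro s _ hs; simp [Matrix.of_apply, hs]
      · simp
    refine ⟨E * v, st10_U_mul hEU hv, σ * Equiv.swap jc i₀, ?_⟩
    have hN' : E * v * M = E * N := by rw [hN, Matrix.mul_assoc]
    -- key smallness facts
    have subA : ∀ j : Fin n, (j : ℕ) < c → ∀ t : Fin n, j < t → ‖(E * N) (σ t) j‖ < 1 := by
      intro j hj t ht
      rw [hEN]
      refine lt_of_le_of_lt (Padic.nonarchimedean _ _) (max_lt (hσ j hj t ht) ?_)
      calc ‖g (σ t) * N (σ i₀) j‖ = ‖g (σ t)‖ * ‖N (σ i₀) j‖ := norm_mul _ _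
        _ ≤ 1 * ‖N (σ i₀) j‖ := by
            exact mul_le_mul_of_nonneg_right (hgnorm _) (norm_nonneg _)
        _ = ‖N (σ i₀) j‖ := one_mul _
        _ < 1 := hσ j hj i₀ (by rw [Fin.lt_def]; omega)
    have subB : ∀ t : Fin n, c ≤ (t : ℕ) → t ≠ i₀ → ‖(E * N) (σ t) jc‖ < 1 := by
      intro t htc hti₀
      rw [hEN]
      have hsymm : σ.symm (σ t) = t := Equiv.symm_apply_apply σ t
      by_cases hu : ‖N (σ t) jc‖ = 1
      · have hcond : c ≤ ((σ.symm (σ t) : Fin n) : ℕ) ∧ σ t ≠ σ i₀ ∧ ‖N (σ t) jc‖ = 1 := by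
          refine ⟨by rwa [hsymm], fun h => hti₀ (σ.injective h), hu⟩
        simp only [hg, if_pos hcond]
        rw [neg_div, neg_mul, div_mul_cancel₀ _ hpivne]
        simp
      · have hgt : g (σ t) = 0 := by
          have hcond2 : ¬(c ≤ ((σ.symm (σ t) : Fin n) : ℕ) ∧ σ t ≠ σ i₀ ∧ ‖N (σ t) jc‖ = 1) := by
            intro h; exact hu h.2.2
          simp only [hg, if_neg hcond2]
        rw [hgt, zero_mul, add_zero]
        exact lt_of_le_of_ne (hNK.1 _ _) hu
    intro j hj i hi
    rw [hN']
    have hji : (j : ℕ) < (i : ℕ) := hi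
    rcases Nat.lt_or_ge (j : ℕ) c with hjc' | hjc'
    · -- j < c : use subA
      have : (Equiv.swap jc i₀ i : Fin n) = Equiv.swap jc i₀ i := rfl
      set t := Equiv.swap jc i₀ i with hts
      have htj : j < t := by
        rw [Fin.lt_def]
        by_cases h1 : i = jc
        · rw [hts, h1, Equiv.swap_apply_left]; omega
        · by_cases h2 : i = i₀
          · rw [hts, h2, Equiv.swap_apply_right]; simp [hjc]; omega
          · rw [hts, Equiv.swap_apply_of_ne_of_ne h1 h2]; omega
      exact subA j hjc' t htj
    · -- j = jc
      have hjeq : j = jc := by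
        have : (j : ℕ) = c := by omega
        exact Fin.ext this
      subst hjeq
      have hijc : i ≠ jc := by
        intro h; rw [h] at hi; exact lt_irrefl _ hi
      by_cases h2 : i = i₀
      · subst h2
        have : Equiv.swap jc i (i) = jc := Equiv.swap_apply_right jc i
        rw [show (σ * Equiv.swap jc i) i = σ jc by
          rw [Equiv.Perm.mul_apply, Equiv.swap_apply_right]]
        refine subB jc (le_refl c) ?_
        intro h
        rw [h] at hi
        exact lt_irrefl _ hi
      · rw [show (σ * Equiv.swap jc i₀) i = σ i by
          rw [Equiv.Perm.mul_apply, Equiv.swap_apply_of_ne_of_ne hijc h2]]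
        refine subB i ?_ h2
        have : (jc : ℕ) < (i : ℕ) := hi
        simp [hjc] at this
        omega

lemma st10_K_perm (σ : Equiv.Perm (Fin n)) : σ.permMatrix ℚ_[p] ∈ GLZset p n := by
  constructor
  · intro i j
    show ‖σ.toPEquiv.toMatrix i j‖ ≤ 1
    rw [PEquiv.toMatrix_apply]
    split <;> simp
  · rw [Matrix.det_permutation]
    rcases Int.units_eq_one_or (Equiv.Perm.sign σ) with hs | hs <;> rw [hs] <;> simp

lemma st10_decomp (M : Matrix (Fin n) (Fin n) ℚ_[p]) (hM : M ∈ GLZset p n) :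
    ∃ u ∈ UpperUnipZ p n, ∃ ρ : Equiv.Perm (Fin n), ∃ h ∈ GLZset p n,
      (∀ i j : Fin n, j < i → ‖h i j‖ < 1) ∧ M = u * (ρ.permMatrix ℚ_[p]) * h := by
  obtain ⟨v, hv, σ, hσ⟩ := st10_elim M hM n le_rfl
  obtain ⟨hvinv, hvl, hvr⟩ := st10_U_inv hv
  refine ⟨v⁻¹, hvinv, σ⁻¹, (σ.permMatrix ℚ_[p]) * (v * M), ?_, ?_, ?_⟩
  · exact st10_K_mul (st10_K_perm σ) (st10_K_mul (st10_U_subset_K hv) hM)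
  · intro i j hij
    rw [PEquiv.toMatrix_toPEquiv_mul]
    exact hσ j j.isLt i hij
  · rw [PEquiv.toMatrix_toPEquiv_mul, mul_assoc,
      show (Equiv.Perm.permMatrix ℚ_[p] σ⁻¹) * ((v * M).submatrix (⇑σ) id)
          = ((v * M).submatrix (⇑σ) id).submatrix (⇑σ⁻¹) id from
        PEquiv.toMatrix_toPEquiv_mul σ⁻¹ _,
      Matrix.submatrix_submatrix]
    have hcomp : (⇑σ ∘ ⇑σ⁻¹) = id := by
      funext x; simp
    rw [hcomp, Function.comp_id, Matrix.submatrix_id_id, ← mul_assoc, hvl, one_mul]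

lemma st10_p_ne_zero : ((p : ℚ_[p])) ≠ 0 := by
  have := (Fact.out : p.Prime).ne_zero
  exact_mod_cast this

lemma st10_conj (m : ℕ) (h : Matrix (Fin n) (Fin n) ℚ_[p]) (hK : h ∈ GLZset p n)
    (hsmall : ∀ i j : Fin n, j < i → ‖h i j‖ < 1) :
    ∃ h' ∈ GLZset p n,
      h * Matrix.diagonal (fun i : Fin n => if (i : ℕ) < m then 1 else (p : ℚ_[p]))
        = Matrix.diagonal (fun i : Fin n => if (i : ℕ) < m then 1 else (p : ℚ_[p])) * h' := by
  set d : Fin n → ℚ_[p] := fun i => if (i : ℕ) < m then 1 else (p : ℚ_[p]) with hd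
  have hdne : ∀ i, d i ≠ 0 := by
    intro i; rw [hd]; dsimp only; split
    · exact one_ne_zero
    · exact st10_p_ne_zero
  have hdnorm : ∀ i, ‖d i‖ ≤ 1 := by
    intro i; rw [hd]; dsimp only; split
    · simp
    · rw [Padic.norm_p]
      rw [inv_le_one_iff₀]
      right
      exact_mod_cast (Fact.out : p.Prime).one_lt.le
  set h' : Matrix (Fin n) (Fin n) ℚ_[p] := Matrix.of fun i j => (d i)⁻¹ * h i j * d j with hh'
  have heq : h * Matrix.diagonal d = Matrix.diagonal d * h' := by
    ext i j
    rw [Matrix.mul_diagonal, Matrix.diagonal_mul, hh']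
    simp only [Matrix.of_apply]
    field_simp
    rw [mul_div_assoc, div_self (hdne i), mul_one]
  refine ⟨h', ⟨?_, ?_⟩, heq⟩
  · intro i j
    rw [hh']
    simp only [Matrix.of_apply]
    rw [norm_mul, norm_mul, norm_inv]
    by_cases hi : (i : ℕ) < m
    · have : ‖d i‖ = 1 := by rw [hd]; simp [hi]
      rw [this, inv_one, one_mul]
      calc ‖h i j‖ * ‖d j‖ ≤ 1 * 1 :=
            mul_le_mul (hK.1 i j) (hdnorm j) (norm_nonneg _) zero_le_one
        _ = 1 := one_mul 1
    · have hdi : ‖d i‖ = (p : ℝ)⁻¹ := by rw [hd]; simp [hi, Padic.norm_p]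
      by_cases hj : (j : ℕ) < m
      · -- strictly below-diagonal entry divided by p
        have hdj : ‖d j‖ = 1 := by rw [hd]; simp [hj]
        have hji : j < i := by rw [Fin.lt_def]; omega
        have hlt : ‖h i j‖ < 1 := hsmall i j hji
        have hle : ‖h i j‖ ≤ (p : ℝ)⁻¹ := by
          have := (Padic.norm_le_pow_iff_norm_lt_pow_add_one (h i j) (-1)).mpr
          simp only [neg_add_cancel, zpow_zero, zpow_neg_one] at this
          exact_mod_cast this (by exact_mod_cast hlt)
        rw [hdi, hdj, mul_one, inv_inv]
        calc (p : ℝ) * ‖h i j‖ ≤ (p : ℝ) * (p : ℝ)⁻¹ :=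
              mul_le_mul_of_nonneg_left hle (by positivity)
          _ = 1 := by
              rw [mul_inv_cancel₀]
              exact_mod_cast (Fact.out : p.Prime).ne_zero
      · have hdj : ‖d j‖ = (p : ℝ)⁻¹ := by rw [hd]; simp [hj, Padic.norm_p]
        rw [hdi, hdj, inv_inv]
        have hp0 : (0 : ℝ) < (p : ℝ) := by
          exact_mod_cast (Fact.out : p.Prime).pos
        have hrw : (p : ℝ) * ‖h i j‖ * (p : ℝ)⁻¹ = ‖h i j‖ * ((p : ℝ) * (p : ℝ)⁻¹) := by ring
        rw [hrw, mul_inv_cancel₀ (ne_of_gt hp0), mul_one]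
        exact hK.1 i j
  · -- determinant
    have hdetT : (Matrix.diagonal d).det ≠ 0 := by
      rw [Matrix.det_diagonal]
      exact Finset.prod_ne_zero_iff.mpr fun i _ => hdne i
    have := congrArg Matrix.det heq
    rw [Matrix.det_mul, Matrix.det_mul] at this
    have hdet : h'.det = h.det := by
      apply mul_left_cancel₀ hdetT
      rw [← this, mul_comm]
    rw [hdet, hK.2]

end St10Aux

/-- coset decomposition from the proof of Proposition 6.7, `GL_n`
minuscule case: with `t` the diagonal matrix having `1` in the first `m` positions and
`p` in the remaining ones, `K t K = ⋃_{σ ∈ S_n} U(ℤ_p) P_σ t K`. -/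
theorem statement10 (p : ℕ) [Fact p.Prime] (n m : ℕ) (hn : 2 ≤ n)
    (hm1 : 1 ≤ m) (hm2 : m ≤ n - 1) :
    GLZset p n * {Matrix.diagonal fun i : Fin n => if (i : ℕ) < m then 1 else (p : ℚ_[p])} *
        GLZset p n =
      ⋃ σ : Equiv.Perm (Fin n),
        UpperUnipZ p n * {σ.permMatrix ℚ_[p]} *
          {Matrix.diagonal fun i : Fin n => if (i : ℕ) < m then 1 else (p : ℚ_[p])} *
          GLZset p n := by
  set T : Matrix (Fin n) (Fin n) ℚ_[p] :=
    Matrix.diagonal fun i : Fin n => if (i : ℕ) < m then 1 else (p : ℚ_[p]) with hT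
  ext x
  constructor
  · intro hx
    rw [Set.mem_mul] at hx
    obtain ⟨y, hy, k', hk', rfl⟩ := hx
    rw [Set.mem_mul] at hy
    obtain ⟨k, hk, t', ht', rfl⟩ := hy
    rw [Set.mem_singleton_iff] at ht'
    subst ht'
    obtain ⟨u, hu, ρ, h, hhK, hhsmall, hkeq⟩ := st10_decomp k hk
    obtain ⟨h', hh'K, hconj⟩ := st10_conj m h hhK hhsmall
    rw [Set.mem_iUnion]
    refine ⟨ρ, ?_⟩
    have key : k * T * k' = u * ρ.permMatrix ℚ_[p] * T * (h' * k') := by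
      calc k * T * k' = u * ρ.permMatrix ℚ_[p] * (h * T) * k' := by
            rw [hkeq]; simp only [mul_assoc]
        _ = u * ρ.permMatrix ℚ_[p] * (T * h') * k' := by rw [hconj]
        _ = u * ρ.permMatrix ℚ_[p] * T * (h' * k') := by simp only [mul_assoc]
    rw [key]
    exact Set.mul_mem_mul
      (Set.mul_mem_mul
        (Set.mul_mem_mul hu (Set.mem_singleton _)) (Set.mem_singleton _))
      (st10_K_mul hh'K hk')
  · intro hx
    rw [Set.mem_iUnion] at hx
    obtain ⟨σ, hx⟩ := hx
    rw [Set.mem_mul] at hx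
    obtain ⟨y, hy, k, hk, rfl⟩ := hx
    rw [Set.mem_mul] at hy
    obtain ⟨z, hz, t', ht', rfl⟩ := hy
    rw [Set.mem_singleton_iff] at ht'
    subst ht'
    rw [Set.mem_mul] at hz
    obtain ⟨u, hu, P, hP, rfl⟩ := hz
    rw [Set.mem_singleton_iff] at hP
    subst hP
    exact Set.mul_mem_mul
      (Set.mul_mem_mul (st10_K_mul (st10_U_subset_K hu) (st10_K_perm σ))
        (Set.mem_singleton _))
      hk
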